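/- Let M ≥ 2 be an integer, M_s an integer with 0 ≤ M_s ≤ M, and x a real number with sin(x/2) ≠ 0; set D = sin(M·x/2)/sin(x/2). For a subset S of {1,...,M} define u(S) = 2·Σ_{m∈S} z_m − Σ_{m=1}^M z_m with z_m = exp(i·x·(m − (M+1)/2)). Then the variance of u under the uniform distribution on size-M_s subsets, i.e. (1/binom(M,M_s))·Σ_{|S|=M_s} |u(S)|² − |(1/binom(M,M_s))·Σ_{|S|=M_s} u(S)|², equals 4·(M_s(M−M_s)/(M(M−1)))·(M − D²/M). -/

import Mathlib

open Finset Complex Real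

variable {α : Type*} [DecidableEq α]

lemma count_one (s : Finset α) (a : α) (ha : a ∈ s) (k : ℕ) :
    ((s.powersetCard (k+1)).filter (fun S => a ∈ S)).card = (s.card - 1).choose k := by
  have hset : (s.powersetCard (k+1)).filter (fun S => a ∈ S)
      = ((s.erase a).powersetCard k).image (insert a) := by
    ext S
    simp only [mem_filter, mem_powersetCard, mem_image]
    constructor
    · rintro ⟨⟨hSs, hcard⟩, haS⟩
      refine ⟨S.erase a, ⟨fun y hy => ?_, ?_⟩, insert_erase haS⟩
      · rcases mem_erase.1 hy with ⟨hya, hyS⟩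
        exact mem_erase.2 ⟨hya, hSs hyS⟩
      · rw [card_erase_of_mem haS, hcard]; rfl
    · rintro ⟨T, ⟨hTs, hTc⟩, rfl⟩
      have haT : a ∉ T := fun h => (mem_erase.1 (hTs h)).1 rfl
      refine ⟨⟨?_, ?_⟩, mem_insert_self _ _⟩
      · intro y hy
        rcases mem_insert.1 hy with rfl | hyT
        · exact ha
        · exact (erase_subset _ _) (hTs hyT)
      · rw [card_insert_of_notMem haT, hTc]
  rw [hset, card_image_of_injOn, card_powersetCard, card_erase_of_mem ha]
  intro T hT T' hT' h
  simp only [Finset.mem_coe, mem_powersetCard] at hT hT'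
  have haT : a ∉ T := fun hh => (mem_erase.1 (hT.1 hh)).1 rfl
  have haT' : a ∉ T' := fun hh => (mem_erase.1 (hT'.1 hh)).1 rfl
  rw [← erase_insert haT, ← erase_insert haT', h]

lemma count_two (s : Finset α) (a b : α) (ha : a ∈ s) (hb : b ∈ s) (hab : a ≠ b) (k : ℕ) :
    ((s.powersetCard (k+2)).filter (fun S => a ∈ S ∧ b ∈ S)).card = (s.card - 2).choose k := by
  have hset : (s.powersetCard (k+2)).filter (fun S => a ∈ S ∧ b ∈ S)
      = (((s.erase a).erase b).powersetCard k).image (fun T => insert a (insert b T)) := by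
    ext S
    simp only [mem_filter, mem_powersetCard, mem_image]
    constructor
    · rintro ⟨⟨hSs, hcard⟩, haS, hbS⟩
      refine ⟨(S.erase a).erase b, ⟨fun y hy => ?_, ?_⟩, ?_⟩
      · rcases mem_erase.1 hy with ⟨hyb, hy'⟩
        rcases mem_erase.1 hy' with ⟨hya, hyS⟩
        exact mem_erase.2 ⟨hyb, mem_erase.2 ⟨hya, hSs hyS⟩⟩
      · rw [card_erase_of_mem (mem_erase.2 ⟨hab.symm, hbS⟩), card_erase_of_mem haS, hcard]
        omega
      · rw [insert_erase (mem_erase.2 ⟨hab.symm, hbS⟩), insert_erase haS]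
    · rintro ⟨T, ⟨hTs, hTc⟩, rfl⟩
      have hbT : b ∉ T := fun h => (mem_erase.1 (hTs h)).1 rfl
      have haT : a ∉ insert b T := by
        intro h
        rcases mem_insert.1 h with rfl | h'
        · exact hab rfl
        · exact (mem_erase.1 ((erase_subset _ _) (hTs h'))).1 rfl
      refine ⟨⟨?_, ?_⟩, mem_insert_self _ _, mem_insert.2 (Or.inr (mem_insert_self _ _))⟩
      · intro y hy
        rcases mem_insert.1 hy with rfl | hy'
        · exact ha
        rcases mem_insert.1 hy' with rfl | hy''
        · exact hb
        · exact (erase_subset _ _) ((erase_subset _ _) (hTs hy''))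
      · rw [card_insert_of_notMem haT, card_insert_of_notMem hbT, hTc]
  rw [hset, card_image_of_injOn, card_powersetCard, card_erase_of_mem (mem_erase.2 ⟨hab.symm, hb⟩),
    card_erase_of_mem ha]
  · congr 1
  · intro T hT T' hT' h
    simp only [Finset.mem_coe, mem_powersetCard] at hT hT'
    have h1 : b ∉ T := fun hh => (mem_erase.1 (hT.1 hh)).1 rfl
    have h1' : b ∉ T' := fun hh => (mem_erase.1 (hT'.1 hh)).1 rfl
    have h2 : a ∉ insert b T := by
      intro hh
      rcases mem_insert.1 hh with rfl | hh'
      · exact hab rfl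
      · exact (mem_erase.1 ((erase_subset _ _) (hT.1 hh'))).1 rfl
    have h2' : a ∉ insert b T' := by
      intro hh
      rcases mem_insert.1 hh with rfl | hh'
      · exact hab rfl
      · exact (mem_erase.1 ((erase_subset _ _) (hT'.1 hh'))).1 rfl
    have := congrArg (fun X => (X.erase a).erase b) h
    simpa [erase_insert h2, erase_insert h2', erase_insert h1, erase_insert h1'] using this


lemma dirichlet_sum (M : ℕ) (hM : 1 ≤ M) (x : ℝ) (hx : Real.sin (x / 2) ≠ 0) :
    ∑ m ∈ Finset.Icc 1 M, Complex.exp (Complex.I * ((x * ((m : ℝ) - (M + 1) / 2) : ℝ) : ℂ))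
      = ((Real.sin (M * x / 2) / Real.sin (x / 2) : ℝ) : ℂ) := by
  set w : ℂ := Complex.exp (Complex.I * ((x : ℂ) / 2)) with hw
  have hw0 : w ≠ 0 := Complex.exp_ne_zero _
  have hc : Complex.exp (Complex.I * (x : ℂ)) = w ^ 2 := by
    rw [hw, ← Complex.exp_nat_mul]
    congr 1
    push_cast
    ring
  have hc1 : w ^ 2 ≠ 1 := by
    rw [← hc]
    intro h
    rcases Complex.exp_eq_one_iff.1 h with ⟨n, hn⟩
    have hxn : (x : ℂ) = ((2 * n * π : ℝ) : ℂ) := by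
      have h' : Complex.I * (x : ℂ) = Complex.I * ((2 * n * π : ℝ) : ℂ) := by
        push_cast
        linear_combination hn
      exact mul_left_cancel₀ Complex.I_ne_zero h'
    have hxr : x = 2 * n * π := by exact_mod_cast hxn
    apply hx
    rw [hxr]
    have : (2 : ℝ) * n * π / 2 = n * π := by ring
    rw [this, Real.sin_int_mul_pi]
  have hterm : ∀ m : ℕ, Complex.exp (Complex.I * ((x * ((m : ℝ) - (M + 1) / 2) : ℝ) : ℂ))
      = (w ^ 2) ^ m / w ^ (M + 1) := by
    intro m
    rw [hw, ← Complex.exp_nat_mul, ← Complex.exp_nat_mul, ← Complex.exp_nat_mul,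
      ← Complex.exp_sub]
    congr 1
    push_cast
    ring
  rw [Finset.sum_congr rfl fun m _ => hterm m, ← Finset.sum_div]
  have hgeom : ∑ m ∈ Finset.Icc 1 M, (w ^ 2) ^ m
      = ((w ^ 2) ^ (M + 1) - (w ^ 2) ^ 1) / (w ^ 2 - 1) := by
    rw [← Finset.Ico_add_one_right_eq_Icc, geom_sum_Ico hc1 (by omega)]
  rw [hgeom]
  have e1 : Complex.exp (((M * x / 2 : ℝ) : ℂ) * Complex.I) = w ^ M := by
    rw [hw, ← Complex.exp_nat_mul]
    congr 1
    push_cast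
    ring
  have e2 : Complex.exp (-((M * x / 2 : ℝ) : ℂ) * Complex.I) = (w ^ M)⁻¹ := by
    rw [neg_mul, Complex.exp_neg, e1]
  have f1 : Complex.exp (((x / 2 : ℝ) : ℂ) * Complex.I) = w := by
    rw [hw]
    congr 1
    push_cast
    ring
  have f2 : Complex.exp (-((x / 2 : ℝ) : ℂ) * Complex.I) = w⁻¹ := by
    rw [neg_mul, Complex.exp_neg, f1]
  have hsM : ((Real.sin (M * x / 2) : ℝ) : ℂ) = (1 - w ^ (2 * M)) * Complex.I / (2 * w ^ M) := by
    rw [Complex.ofReal_sin, Complex.sin, e1, e2]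
    have hM0 : (w : ℂ) ^ M ≠ 0 := pow_ne_zero _ hw0
    field_simp
    ring
  have hsx : ((Real.sin (x / 2) : ℝ) : ℂ) = (1 - w ^ 2) * Complex.I / (2 * w) := by
    rw [Complex.ofReal_sin, Complex.sin, f1, f2]
    field_simp
  have h2 : w ^ 2 - 1 ≠ 0 := sub_ne_zero.2 hc1
  have h2' : (1 : ℂ) - w ^ 2 ≠ 0 := fun h => h2 (by linear_combination -h)
  rw [Complex.ofReal_div, hsM, hsx]
  have hM0 : (w : ℂ) ^ M ≠ 0 := pow_ne_zero _ hw0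
  field_simp
  ring


noncomputable def zf (M : ℕ) (x : ℝ) : ℕ → ℂ :=
  fun m => Complex.exp (Complex.I * ((x * ((m : ℝ) - (M + 1) / 2) : ℝ) : ℂ))

lemma aux (M Ms : ℕ) (hM : 2 ≤ M) (hMs : Ms ≤ M) (x : ℝ)
    (hx : Real.sin (x / 2) ≠ 0) :
    (1 / (Nat.choose M Ms : ℝ)) *
        ∑ S ∈ (Finset.Icc 1 M).powersetCard Ms,
          ‖2 * ∑ m ∈ S, zf M x m - ∑ m ∈ Finset.Icc 1 M, zf M x m‖ ^ 2
      - ‖(1 / (Nat.choose M Ms : ℂ)) *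
          ∑ S ∈ (Finset.Icc 1 M).powersetCard Ms,
            (2 * ∑ m ∈ S, zf M x m - ∑ m ∈ Finset.Icc 1 M, zf M x m)‖ ^ 2
      = 4 * ((Ms : ℝ) * ((M : ℝ) - Ms) / ((M : ℝ) * ((M : ℝ) - 1))) *
          ((M : ℝ) - (Real.sin (M * x / 2) / Real.sin (x / 2)) ^ 2 / M) := by
  classical
  set z : ℕ → ℂ := zf M x with hzdef
  set A : Finset ℕ := Finset.Icc 1 M with hAdef
  set D : ℝ := Real.sin (M * x / 2) / Real.sin (x / 2) with hDdef
  have hA : A.card = M := by rw [hAdef, Nat.card_Icc]; omega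
  have hS1 : ∑ m ∈ A, z m = (D : ℂ) := dirichlet_sum M (by omega) x hx
  have hz1 : ∀ m : ℕ, z m * (starRingEnd ℂ) (z m) = 1 := by
    intro m
    rw [hzdef]
    simp only [zf]
    rw [← Complex.exp_conj, ← Complex.exp_add]
    have : (starRingEnd ℂ) (Complex.I * ((x * ((m : ℝ) - (M + 1) / 2) : ℝ) : ℂ))
        = -(Complex.I * ((x * ((m : ℝ) - (M + 1) / 2) : ℝ) : ℂ)) := by
      rw [map_mul, Complex.conj_I, Complex.conj_ofReal]
      ring
    rw [this, add_neg_cancel, Complex.exp_zero]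
  rcases Nat.eq_zero_or_pos Ms with rfl | hMs1
  · simp only [Finset.powersetCard_zero, Finset.sum_singleton, Finset.sum_empty, mul_zero,
      zero_sub, Nat.choose_zero_right, Nat.cast_one, Nat.cast_zero]
    rw [hS1]
    simp only [norm_neg, Complex.norm_real, Real.norm_eq_abs, _root_.sq_abs, one_div, inv_one, one_mul, mul_neg]
    ring
  obtain ⟨k, rfl⟩ : ∃ k, Ms = k + 1 := ⟨Ms - 1, by omega⟩
  set P : Finset (Finset ℕ) := A.powersetCard (k+1) with hPdef
  set C : ℕ := M.choose (k+1) with hCdef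
  set c1 : ℕ := (M-1).choose k with hc1def
  set c2 : ℕ := if k = 0 then 0 else (M-2).choose (k-1) with hc2def
  have hPcard : P.card = C := by rw [hPdef, Finset.card_powersetCard, hA]
  have hcnt1 : ∀ m ∈ A, (P.filter (fun S => m ∈ S)).card = c1 := by
    intro m hm
    rw [hPdef, count_one A m hm k, hA]
  have hcnt2 : ∀ m ∈ A, ∀ n ∈ A, m ≠ n → (P.filter (fun S => m ∈ S ∧ n ∈ S)).card = c2 := by
    intro m hm n hn hmn
    rcases Nat.eq_zero_or_pos k with rfl | hk
    · rw [hc2def, if_pos rfl, Finset.card_eq_zero, Finset.filter_eq_empty_iff]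
      rintro S hS ⟨h1, h2⟩
      have hsub : ({m, n} : Finset ℕ) ⊆ S := by
        intro y hy
        rcases Finset.mem_insert.1 hy with rfl | hy
        · exact h1
        · rw [Finset.mem_singleton.1 hy]; exact h2
      have hle := Finset.card_le_card hsub
      rw [Finset.card_pair hmn, (Finset.mem_powersetCard.1 hS).2] at hle
      omega
    · obtain ⟨j, rfl⟩ : ∃ j, k = j + 1 := ⟨k - 1, by omega⟩
      rw [hc2def, if_neg (by omega), hPdef, count_two A m n hm hn hmn, hA]
      norm_num
  have hsub : ∀ S ∈ P, S ⊆ A := fun S hS => (Finset.mem_powersetCard.1 hS).1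
  have hext : ∀ S ∈ P, ∀ f : ℕ → ℂ, ∑ m ∈ S, f m = ∑ m ∈ A, if m ∈ S then f m else 0 := by
    intro S hS f
    rw [Finset.sum_ite_mem, Finset.inter_eq_right.mpr (hsub S hS)]
  have hP1 : ∑ S ∈ P, (∑ m ∈ S, z m) = (c1 : ℂ) * (D : ℂ) := by
    calc ∑ S ∈ P, (∑ m ∈ S, z m) = ∑ S ∈ P, ∑ m ∈ A, (if m ∈ S then z m else 0) :=
          Finset.sum_congr rfl fun S hS => hext S hS z
      _ = ∑ m ∈ A, ∑ S ∈ P, (if m ∈ S then z m else 0) := Finset.sum_comm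
      _ = ∑ m ∈ A, (c1 : ℂ) * z m := by
          refine Finset.sum_congr rfl fun m hm => ?_
          rw [Finset.sum_ite, Finset.sum_const, Finset.sum_const_zero, add_zero,
            hcnt1 m hm, nsmul_eq_mul]
      _ = (c1 : ℂ) * ∑ m ∈ A, z m := by rw [Finset.mul_sum]
      _ = _ := by rw [hS1]
  have hQ : ∑ S ∈ P, ((∑ m ∈ S, z m) * (starRingEnd ℂ) (∑ m ∈ S, z m))
      = ((c1 : ℂ) - c2) * M + (c2 : ℂ) * (D : ℂ)^2 := by
    have step1 : ∀ S ∈ P, (∑ m ∈ S, z m) * (starRingEnd ℂ) (∑ m ∈ S, z m)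
        = ∑ m ∈ A, ∑ n ∈ A, (if m ∈ S ∧ n ∈ S then z m * (starRingEnd ℂ) (z n) else 0) := by
      intro S hS
      rw [map_sum, Finset.sum_mul_sum]
      rw [hext S hS (fun m => ∑ n ∈ S, z m * (starRingEnd ℂ) (z n))]
      refine Finset.sum_congr rfl fun m hm => ?_
      by_cases hmS : m ∈ S
      · simp only [hmS, if_true, true_and]
        exact hext S hS (fun n => z m * (starRingEnd ℂ) (z n))
      · simp [hmS]
    calc ∑ S ∈ P, ((∑ m ∈ S, z m) * (starRingEnd ℂ) (∑ m ∈ S, z m))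
        = ∑ S ∈ P, ∑ m ∈ A, ∑ n ∈ A,
            (if m ∈ S ∧ n ∈ S then z m * (starRingEnd ℂ) (z n) else 0) :=
          Finset.sum_congr rfl step1
      _ = ∑ m ∈ A, ∑ n ∈ A, ∑ S ∈ P,
            (if m ∈ S ∧ n ∈ S then z m * (starRingEnd ℂ) (z n) else 0) := by
          rw [Finset.sum_comm]
          exact Finset.sum_congr rfl fun m _ => Finset.sum_comm
      _ = ∑ m ∈ A, ∑ n ∈ A, ((c2 : ℂ) * (z m * (starRingEnd ℂ) (z n)) +
            if m = n then ((c1 : ℂ) - c2) else 0) := by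
          refine Finset.sum_congr rfl fun m hm => Finset.sum_congr rfl fun n hn => ?_
          rw [Finset.sum_ite, Finset.sum_const, Finset.sum_const_zero, add_zero, nsmul_eq_mul]
          by_cases hmn : m = n
          · subst hmn
            have hcc : (P.filter (fun S => m ∈ S ∧ m ∈ S)).card = c1 := by
              rw [← hcnt1 m hm]
              congr 1
              exact Finset.filter_congr fun S _ => by simp
            rw [hcc, if_pos rfl, hz1 m]
            ring
          · rw [hcnt2 m hm n hn hmn, if_neg hmn, add_zero]
      _ = ((c1 : ℂ) - c2) * M + (c2 : ℂ) * (D : ℂ)^2 := by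
          simp only [Finset.sum_add_distrib]
          have e1 : ∑ m ∈ A, ∑ n ∈ A, (c2 : ℂ) * (z m * (starRingEnd ℂ) (z n))
              = (c2 : ℂ) * (D : ℂ)^2 := by
            have h' : ∑ m ∈ A, ∑ n ∈ A, (c2 : ℂ) * (z m * (starRingEnd ℂ) (z n))
                = (c2 : ℂ) * ((∑ m ∈ A, z m) * (starRingEnd ℂ) (∑ m ∈ A, z m)) := by
              rw [map_sum, Finset.sum_mul_sum, Finset.mul_sum]
              exact Finset.sum_congr rfl fun m _ => by rw [Finset.mul_sum]
            rw [h', hS1, Complex.conj_ofReal]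
            ring
          have e2 : ∑ m ∈ A, ∑ n ∈ A, (if m = n then ((c1 : ℂ) - c2) else 0)
              = ((c1 : ℂ) - c2) * M := by
            have h' : ∀ m ∈ A, ∑ n ∈ A, (if m = n then ((c1 : ℂ) - c2) else 0)
                = ((c1 : ℂ) - c2) := by
              intro m hm
              rw [Finset.sum_ite_eq A m (fun _ => ((c1 : ℂ) - c2)), if_pos hm]
            rw [Finset.sum_congr rfl h', Finset.sum_const, hA, nsmul_eq_mul]
            ring
          rw [e1, e2]
          ring
  have hU : ∑ S ∈ P, (2 * ∑ m ∈ S, z m - ∑ m ∈ A, z m)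
      = (((2 * c1 - C : ℝ) * D : ℝ) : ℂ) := by
    rw [Finset.sum_sub_distrib, Finset.sum_const, hPcard, ← Finset.mul_sum, hP1, hS1,
      nsmul_eq_mul]
    push_cast
    ring
  have hbig : ((∑ S ∈ P, ‖2 * ∑ m ∈ S, z m - ∑ m ∈ A, z m‖ ^ 2 : ℝ) : ℂ)
      = (((4*(c1:ℝ)*M + 4*(c2:ℝ)*(D^2 - M) - 4*(c1:ℝ)*D^2 + (C:ℝ)*D^2 : ℝ)) : ℂ) := by
    rw [Complex.ofReal_sum]
    calc ∑ S ∈ P, ((‖2 * ∑ m ∈ S, z m - ∑ m ∈ A, z m‖ ^ 2 : ℝ) : ℂ)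
        = ∑ S ∈ P, ((2 * ∑ m ∈ S, z m - ∑ m ∈ A, z m) *
              (starRingEnd ℂ) (2 * ∑ m ∈ S, z m - ∑ m ∈ A, z m)) := by
          refine Finset.sum_congr rfl fun S _ => ?_
          rw [Complex.sq_norm]
          exact (Complex.mul_conj _).symm
      _ = ∑ S ∈ P, (4 * ((∑ m ∈ S, z m) * (starRingEnd ℂ) (∑ m ∈ S, z m))
            - 2 * (D:ℂ) * (∑ m ∈ S, z m)
            - 2 * (D:ℂ) * ((starRingEnd ℂ) (∑ m ∈ S, z m)) + (D:ℂ)^2) := by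
          refine Finset.sum_congr rfl fun S _ => ?_
          rw [hS1, map_sub, map_mul]
          simp only [Complex.conj_ofReal, map_ofNat]
          ring
      _ = 4 * (∑ S ∈ P, ((∑ m ∈ S, z m) * (starRingEnd ℂ) (∑ m ∈ S, z m)))
            - 2 * (D:ℂ) * (∑ S ∈ P, (∑ m ∈ S, z m))
            - 2 * (D:ℂ) * ((starRingEnd ℂ) (∑ S ∈ P, (∑ m ∈ S, z m)))
            + (C:ℂ) * (D:ℂ)^2 := by
          rw [Finset.sum_add_distrib, Finset.sum_sub_distrib, Finset.sum_sub_distrib,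
            ← Finset.mul_sum, ← Finset.mul_sum, ← Finset.mul_sum, ← map_sum,
            Finset.sum_const, hPcard, nsmul_eq_mul]
      _ = _ := by
          rw [hQ, hP1]
          simp only [map_mul, Complex.conj_ofReal, Complex.conj_natCast]
          push_cast
          ring
  have hreal : ∑ S ∈ P, ‖2 * ∑ m ∈ S, z m - ∑ m ∈ A, z m‖ ^ 2
      = 4*(c1:ℝ)*M + 4*(c2:ℝ)*(D^2 - M) - 4*(c1:ℝ)*D^2 + (C:ℝ)*D^2 := by
    exact_mod_cast hbig
  rw [hreal, hU]
  have hC2 : (1 / (C:ℂ)) * (((2 * c1 - C : ℝ) * D : ℝ) : ℂ)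
      = ((((2 * c1 - C : ℝ) * D / C : ℝ)) : ℂ) := by
    push_cast
    ring
  rw [hC2, Complex.norm_real, Real.norm_eq_abs, _root_.sq_abs]
  have hC0 : (0:ℝ) < C := by
    rw [hCdef]
    exact_mod_cast Nat.choose_pos hMs
  have hCR : (C:ℝ) ≠ 0 := ne_of_gt hC0
  have hMR : (M:ℝ) ≠ 0 := Nat.cast_ne_zero.2 (by omega)
  have hM2R : (2:ℝ) ≤ M := by exact_mod_cast hM
  have hM1R : (M:ℝ) - 1 ≠ 0 := by linarith
  have hc1N : M * c1 = (k+1) * C := by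
    rw [hc1def, hCdef]
    have h' := Nat.add_one_mul_choose_eq (M-1) k
    have hM1 : M - 1 + 1 = M := by omega
    rw [hM1] at h'
    rw [h']
    ring
  have hc1R : (c1:ℝ) = ((k:ℝ)+1) * C / M := by
    have h' := congrArg (Nat.cast : ℕ → ℝ) hc1N
    push_cast at h'
    field_simp
    linarith [h']
  have hc2R : (c2:ℝ) = ((k:ℝ)+1) * k * C / ((M:ℝ) * ((M:ℝ)-1)) := by
    rcases Nat.eq_zero_or_pos k with rfl | hk
    · rw [hc2def]
      simp
    · obtain ⟨j, rfl⟩ : ∃ j, k = j + 1 := ⟨k - 1, by omega⟩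
      have hj : (M-1) * c2 = (j+1) * c1 := by
        rw [hc2def, if_neg (by omega), hc1def]
        have h' := Nat.add_one_mul_choose_eq (M-2) j
        have hM2 : M - 2 + 1 = M - 1 := by omega
        rw [hM2] at h'
        have hjj : j + 1 - 1 = j := by omega
        rw [hjj, h']
        ring
      have hjR := congrArg (Nat.cast : ℕ → ℝ) hj
      push_cast [Nat.cast_sub (by omega : 1 ≤ M)] at hjR
      rw [hc1R] at hjR
      field_simp at hjR ⊢
      push_cast at hjR ⊢
      linarith [hjR]
  rw [hc1R, hc2R]
  field_simp
  push_cast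
  ring


theorem stmt_6 (M Ms : ℕ) (hM : 2 ≤ M) (hMs : Ms ≤ M) (x : ℝ)
    (hx : Real.sin (x / 2) ≠ 0) :
    let D : ℝ := Real.sin (M * x / 2) / Real.sin (x / 2)
    let z : ℕ → ℂ := fun m => Complex.exp (Complex.I * ((x * ((m : ℝ) - (M + 1) / 2) : ℝ) : ℂ))
    let u : Finset ℕ → ℂ := fun S => 2 * ∑ m ∈ S, z m - ∑ m ∈ Finset.Icc 1 M, z m
    (1 / (Nat.choose M Ms : ℝ)) *
        ∑ S ∈ (Finset.Icc 1 M).powersetCard Ms, ‖u S‖ ^ 2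
      - ‖(1 / (Nat.choose M Ms : ℂ)) *
          ∑ S ∈ (Finset.Icc 1 M).powersetCard Ms, u S‖ ^ 2
      = 4 * ((Ms : ℝ) * ((M : ℝ) - Ms) / ((M : ℝ) * ((M : ℝ) - 1))) *
          ((M : ℝ) - D ^ 2 / M) := by
  exact aux M Ms hM hMs x hx
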